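/- Let x, y be probability vectors of dimension d with strictly positive entries, and define F(r) = (1/(r(r−1)))·(ln ∑ y_i^r − ln ∑ x_i^r) for r ≠ 0, 1, F(1) = ∑ y_i ln y_i − ∑ x_i ln x_i, and F(0) = −(1/d)(∑ ln y_i − ∑ ln x_i). Then F is continuous on all of ℝ. -/

import Mathlib

open MeasureTheory Real Finset
open scoped BigOperators Nat

noncomputable section

/-- `x` is majorized by `y`: equal total sums, and each top-`k` partial sum of
`x` (expressed order-free: any sum of `x` over a `k`-element subset) is bounded
by the top-`k` partial sum of `y` (the max over `k`-element subsets). -/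
def IsMajorized {d : ℕ} (x y : Fin d → ℝ) : Prop :=
  (∑ i, x i = ∑ i, y i) ∧
    ∀ A : Finset (Fin d), ∃ B : Finset (Fin d),
      B.card = A.card ∧ ∑ i ∈ A, x i ≤ ∑ i ∈ B, y i

/-- A probability vector: nonnegative entries summing to `1`. -/
def IsProbVec {d : ℕ} (x : Fin d → ℝ) : Prop := (∀ i, 0 ≤ x i) ∧ ∑ i, x i = 1

/-- Tensor product of vectors: components `x i * z j`. -/
def tens {d l : ℕ} (x : Fin d → ℝ) (z : Fin l → ℝ) : Fin (d * l) → ℝ :=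
  fun k => x (finProdFinEquiv.symm k).1 * z (finProdFinEquiv.symm k).2

/-- Catalytic majorization: some finite-dimensional probability vector `z`
satisfies `x ⊗ z ≺ y ⊗ z`. -/
def CatMaj {d : ℕ} (x y : Fin d → ℝ) : Prop :=
  ∃ (l : ℕ) (z : Fin l → ℝ), IsProbVec z ∧ IsMajorized (tens x z) (tens y z)

open Filter
open scoped Topology

private lemma logsum_hasDerivAt {d : ℕ} (hd : 0 < d) (v : Fin d → ℝ) (hv : ∀ i, 0 < v i)
    (r₀ : ℝ) :
    HasDerivAt (fun r => Real.log (∑ i, v i ^ r))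
      ((∑ i, v i ^ r₀ * Real.log (v i)) / (∑ i, v i ^ r₀)) r₀ := by
  have hne : Nonempty (Fin d) := Fin.pos_iff_nonempty.mp hd
  have hsum : HasDerivAt (fun r => ∑ i, v i ^ r) (∑ i, v i ^ r₀ * Real.log (v i)) r₀ :=
    HasDerivAt.fun_sum (fun i _ => (Real.hasStrictDerivAt_const_rpow (hv i) r₀).hasDerivAt)
  have hpos : 0 < ∑ i, v i ^ r₀ :=
    Finset.sum_pos (fun i _ => Real.rpow_pos_of_pos (hv i) r₀) Finset.univ_nonempty
  exact hsum.log hpos.ne'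

/-- the function `F` measuring the difference of the (suitably
normalized) `f_r` values of `y` and `x` is continuous on all of `ℝ`. -/
theorem stmt8 {d : ℕ} (hd : 0 < d) (x y : Fin d → ℝ)
    (hx : IsProbVec x) (hxp : ∀ i, 0 < x i)
    (hy : IsProbVec y) (hyp : ∀ i, 0 < y i) :
    Continuous (fun r : ℝ =>
      if r = 0 then -(1 / (d : ℝ)) * (∑ i, Real.log (y i) - ∑ i, Real.log (x i))
      else if r = 1 then ∑ i, y i * Real.log (y i) - ∑ i, x i * Real.log (x i)
      else (1 / (r * (r - 1))) *
        (Real.log (∑ i, y i ^ r) - Real.log (∑ i, x i ^ r))) := by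
  
  have hne : Nonempty (Fin d) := Fin.pos_iff_nonempty.mp hd
  have hdne : (d : ℝ) ≠ 0 := Nat.cast_ne_zero.mpr hd.ne'
  set F : ℝ → ℝ := fun r : ℝ =>
      if r = 0 then -(1 / (d : ℝ)) * (∑ i, Real.log (y i) - ∑ i, Real.log (x i))
      else if r = 1 then ∑ i, y i * Real.log (y i) - ∑ i, x i * Real.log (x i)
      else (1 / (r * (r - 1))) *
        (Real.log (∑ i, y i ^ r) - Real.log (∑ i, x i ^ r)) with hF
  set g : ℝ → ℝ := fun r => Real.log (∑ i, y i ^ r) - Real.log (∑ i, x i ^ r) with hgdef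
  have hgd : ∀ r₀ : ℝ, HasDerivAt g
      ((∑ i, y i ^ r₀ * Real.log (y i)) / (∑ i, y i ^ r₀)
        - (∑ i, x i ^ r₀ * Real.log (x i)) / (∑ i, x i ^ r₀)) r₀ :=
    fun r₀ => (logsum_hasDerivAt hd y hyp r₀).sub (logsum_hasDerivAt hd x hxp r₀)
  have hg0 : g 0 = 0 := by simp [hgdef]
  have hg1 : g 1 = 0 := by simp [hgdef, hx.2, hy.2]
  have hFeq : ∀ r : ℝ, r ≠ 0 → r ≠ 1 → F r = (1 / (r * (r - 1))) * g r := by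
    intro r h0 h1; simp [hF, h0, h1, hgdef]
  rw [continuous_iff_continuousAt]
  intro r₀
  rcases eq_or_ne r₀ 0 with h0 | h0
  · subst h0
    have hF0 : F 0 = -(1 / (d : ℝ)) * (∑ i, Real.log (y i) - ∑ i, Real.log (x i)) := by
      simp [hF]
    have hslope : Filter.Tendsto (slope g 0) (𝓝[≠] (0:ℝ))
        (𝓝 ((∑ i, y i ^ (0:ℝ) * Real.log (y i)) / (∑ i, y i ^ (0:ℝ))
          - (∑ i, x i ^ (0:ℝ) * Real.log (x i)) / (∑ i, x i ^ (0:ℝ)))) :=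
      hasDerivAt_iff_tendsto_slope.mp (hgd 0)
    have hinv : Filter.Tendsto (fun r : ℝ => (r - 1)⁻¹) (𝓝[≠] (0:ℝ)) (𝓝 (((0:ℝ) - 1)⁻¹)) :=
      (((continuousAt_id.sub continuousAt_const).inv₀ (by norm_num)).tendsto).mono_left
        nhdsWithin_le_nhds
    have hmul := hslope.mul hinv
    have hcongr : ∀ᶠ r in 𝓝[≠] (0:ℝ), slope g 0 r * (r - 1)⁻¹ = F r := by
      filter_upwards [self_mem_nhdsWithin,
        eventually_nhdsWithin_of_eventually_nhds (eventually_ne_nhds (by norm_num : (0:ℝ) ≠ 1))]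
        with r hr0 hr1
      have hr0' : r ≠ 0 := hr0
      rw [hFeq r hr0' hr1, slope_def_field, hg0]
      field_simp
      try ring
    have hval : ((∑ i, y i ^ (0:ℝ) * Real.log (y i)) / (∑ i, y i ^ (0:ℝ))
          - (∑ i, x i ^ (0:ℝ) * Real.log (x i)) / (∑ i, x i ^ (0:ℝ))) * ((0:ℝ) - 1)⁻¹
        = F 0 := by
      rw [hF0]
      simp only [Real.rpow_zero, one_mul, Finset.sum_const, Finset.card_univ, Fintype.card_fin,
        nsmul_eq_mul, mul_one]
      field_simp
      try ring
    have hfin : Filter.Tendsto F (𝓝[≠] (0:ℝ)) (𝓝 (F 0)) := by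
      rw [← hval]; exact hmul.congr' hcongr
    have : Filter.Tendsto F (𝓝 (0:ℝ)) (𝓝 (F 0)) := by
      rw [← nhdsNE_sup_pure, Filter.tendsto_sup]
      exact ⟨hfin, tendsto_pure_nhds F 0⟩
    exact this
  · rcases eq_or_ne r₀ 1 with h1 | h1
    · subst h1
      have hF1 : F 1 = ∑ i, y i * Real.log (y i) - ∑ i, x i * Real.log (x i) := by
        simp [hF]
      have hslope : Filter.Tendsto (slope g 1) (𝓝[≠] (1:ℝ))
          (𝓝 ((∑ i, y i ^ (1:ℝ) * Real.log (y i)) / (∑ i, y i ^ (1:ℝ))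
            - (∑ i, x i ^ (1:ℝ) * Real.log (x i)) / (∑ i, x i ^ (1:ℝ)))) :=
        hasDerivAt_iff_tendsto_slope.mp (hgd 1)
      have hinv : Filter.Tendsto (fun r : ℝ => r⁻¹) (𝓝[≠] (1:ℝ)) (𝓝 ((1:ℝ)⁻¹)) :=
        ((continuousAt_id.inv₀ (by norm_num)).tendsto).mono_left nhdsWithin_le_nhds
      have hmul := hslope.mul hinv
      have hcongr : ∀ᶠ r in 𝓝[≠] (1:ℝ), slope g 1 r * r⁻¹ = F r := by
        filter_upwards [self_mem_nhdsWithin,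
          eventually_nhdsWithin_of_eventually_nhds (eventually_ne_nhds (by norm_num : (1:ℝ) ≠ 0))]
          with r hr1 hr0
        have hr1' : r ≠ 1 := hr1
        rw [hFeq r hr0 hr1', slope_def_field, hg1]
        field_simp
        try ring
      have hval : ((∑ i, y i ^ (1:ℝ) * Real.log (y i)) / (∑ i, y i ^ (1:ℝ))
            - (∑ i, x i ^ (1:ℝ) * Real.log (x i)) / (∑ i, x i ^ (1:ℝ))) * ((1:ℝ))⁻¹
          = F 1 := by
        rw [hF1]
        simp [Real.rpow_one, hx.2, hy.2]
      have hfin : Filter.Tendsto F (𝓝[≠] (1:ℝ)) (𝓝 (F 1)) := by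
        rw [← hval]; exact hmul.congr' hcongr
      have : Filter.Tendsto F (𝓝 (1:ℝ)) (𝓝 (F 1)) := by
        rw [← nhdsNE_sup_pure, Filter.tendsto_sup]
        exact ⟨hfin, tendsto_pure_nhds F 1⟩
      exact this
    · have hcont : ContinuousAt (fun r : ℝ => (1 / (r * (r - 1))) * g r) r₀ := by
        refine ContinuousAt.mul ?_ (hgd r₀).continuousAt
        exact continuousAt_const.div
          (continuousAt_id.mul (continuousAt_id.sub continuousAt_const))
          (mul_ne_zero h0 (sub_ne_zero.mpr h1))
      refine hcont.congr ?_
      filter_upwards [eventually_ne_nhds h0, eventually_ne_nhds h1] with r hr0 hr1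
      exact (hFeq r hr0 hr1).symm
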